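/- A finite word w is rich if and only if, for each non-empty factor v of w, every factor of w that begins with v, ends with the reversal of v, and contains no occurrence of v or of the reversal of v other than these two, is a palindrome. -/

import Mathlib

/-- The finset of (distinct) palindromic factors of a finite word `w`,
including the empty word. -/
def palFactors {A : Type*} [DecidableEq A] (w : List A) : Finset (List A) :=
  ((w.inits.flatMap List.tails).filter (fun u => u.reverse = u)).toFinset

/-- A finite word `w` is rich if it has exactly `|w| + 1` distinct palindromic factors. -/
def Rich {A : Type*} [DecidableEq A] (w : List A) : Prop :=
  (palFactors w).card = w.length + 1

set_option linter.unusedSectionVars false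
section RichAux
variable {A : Type*} [DecidableEq A]

theorem mem_palFactors {w u : List A} :
    u ∈ palFactors w ↔ u <:+: w ∧ u.reverse = u := by
  unfold palFactors
  simp only [List.mem_toFinset, List.mem_filter, List.mem_flatMap, List.mem_inits,
    List.mem_tails, decide_eq_true_eq]
  constructor
  · rintro ⟨⟨p, hp, hu⟩, hpal⟩
    refine ⟨hu.isInfix.trans hp.isInfix, hpal⟩
  · rintro ⟨⟨s, t, hst⟩, hpal⟩
    exact ⟨⟨s ++ u, ⟨t, hst⟩, ⟨s, rfl⟩⟩, hpal⟩

def lps : List A → List A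
  | [] => []
  | a :: u => if (a :: u).reverse = a :: u then a :: u else lps u

theorem lps_suffix (u : List A) : lps u <:+ u := by
  induction u with
  | nil => exact List.suffix_refl _
  | cons a u ih =>
    rw [lps]
    split
    · exact List.suffix_refl _
    · exact ih.trans (List.suffix_cons a u)

theorem lps_pal (u : List A) : (lps u).reverse = lps u := by
  induction u with
  | nil => rfl
  | cons a u ih =>
    rw [lps]
    split
    · assumption
    · exact ih

theorem length_le_lps {u t : List A} (ht : t <:+ u) (hp : t.reverse = t) :
    t.length ≤ (lps u).length := by
  induction u with
  | nil => simp [List.suffix_nil.mp ht]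
  | cons a u ih =>
    rw [lps]
    rcases List.suffix_cons_iff.mp ht with h | h
    · subst h; rw [if_pos hp]
    · split
      · have := h.length_le
        simp only [List.length_cons]
        omega
      · exact ih h

theorem suffix_of_suffix_length_le {l₁ l₂ l : List A} (h1 : l₁ <:+ l) (h2 : l₂ <:+ l)
    (h : l₁.length ≤ l₂.length) : l₁ <:+ l₂ := by
  have p1 : l₁.reverse <+: l.reverse := List.reverse_prefix.mpr h1
  have p2 : l₂.reverse <+: l.reverse := List.reverse_prefix.mpr h2
  have := List.prefix_of_prefix_length_le p1 p2 (by simpa using h)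
  exact List.reverse_prefix.mp this

theorem infix_dropLast_of_eq {l s q t : List A} (h : s ++ q ++ t = l) (ht : t ≠ []) :
    q <:+: l.dropLast := by
  rcases List.eq_nil_or_concat t with rfl | ⟨t', b, rfl⟩
  · exact absurd rfl ht
  · refine ⟨s, t', ?_⟩
    have hl : (s ++ q ++ t') ++ [b] = l := by
      rw [← h]; simp [List.concat_eq_append]
    rw [← hl, List.dropLast_concat]

theorem infix_concat_cases {w : List A} {a : A} {q : List A} (h : q <:+: w ++ [a]) :
    q <:+: w ∨ q <:+ w ++ [a] := by
  obtain ⟨s, t, hst⟩ := h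
  rcases eq_or_ne t [] with rfl | ht
  · right; exact ⟨s, by simpa using hst⟩
  · left
    have := infix_dropLast_of_eq hst ht
    rwa [List.dropLast_concat] at this

theorem palFactors_mono {w w' : List A} (h : w <:+: w') : palFactors w ⊆ palFactors w' := by
  intro u hu
  rw [mem_palFactors] at *
  exact ⟨hu.1.trans h, hu.2⟩

theorem step_subset (w : List A) (a : A) :
    palFactors (w ++ [a]) ⊆ insert (lps (w ++ [a])) (palFactors w) := by
  intro q hq
  rw [mem_palFactors] at hq
  obtain ⟨hinf, hpal⟩ := hq
  by_cases hw : q <:+: w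
  · exact Finset.mem_insert_of_mem (mem_palFactors.mpr ⟨hw, hpal⟩)
  rcases infix_concat_cases hinf with h | hsuf
  · exact absurd h hw
  rcases eq_or_ne q (lps (w ++ [a])) with rfl | hne
  · exact Finset.mem_insert_self _ _
  exfalso
  have hle : q.length ≤ (lps (w ++ [a])).length := length_le_lps hsuf hpal
  have hqs : q <:+ lps (w ++ [a]) := suffix_of_suffix_length_le hsuf (lps_suffix _) hle
  have hlt : q.length < (lps (w ++ [a])).length :=
    lt_of_le_of_ne hle (fun he => hne (hqs.eq_of_length he))
  have hqp : q <+: lps (w ++ [a]) := by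
    have := List.reverse_prefix.mpr hqs
    rwa [hpal, lps_pal] at this
  obtain ⟨r, hr⟩ := hqp
  obtain ⟨s0, hs0⟩ := lps_suffix (w ++ [a])
  have hrne : r ≠ [] := by
    intro h
    subst h
    rw [List.append_nil] at hr
    exact hne hr
  apply hw
  have heq : s0 ++ q ++ r = w ++ [a] := by
    rw [List.append_assoc, hr, hs0]
  have := infix_dropLast_of_eq heq hrne
  rwa [List.dropLast_concat] at this

theorem palFactors_nil : palFactors ([] : List A) = {[]} := by
  ext u
  rw [mem_palFactors, Finset.mem_singleton]
  constructor
  · rintro ⟨h, -⟩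
    simpa using List.eq_nil_of_infix_nil h
  · rintro rfl
    exact ⟨List.infix_refl _, rfl⟩

theorem card_palFactors_le (w : List A) : (palFactors w).card ≤ w.length + 1 := by
  induction w using List.reverseRecOn with
  | nil => simp [palFactors_nil]
  | append_singleton u a ih =>
    calc (palFactors (u ++ [a])).card
        ≤ (insert (lps (u ++ [a])) (palFactors u)).card :=
          Finset.card_le_card (step_subset u a)
      _ ≤ (palFactors u).card + 1 := Finset.card_insert_le _ _
      _ ≤ (u.length + 1) + 1 := by omega
      _ = (u ++ [a]).length + 1 := by simp

theorem rich_concat_iff {w : List A} {a : A} :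
    Rich (w ++ [a]) ↔ Rich w ∧ ¬ lps (w ++ [a]) <:+: w := by
  have hlen : (w ++ [a]).length = w.length + 1 := by simp
  constructor
  · intro h
    rw [Rich, hlen] at h
    have hsub := Finset.card_le_card (step_subset w a)
    have hins : (insert (lps (w ++ [a])) (palFactors w)).card ≤ (palFactors w).card + 1 :=
      Finset.card_insert_le _ _
    have hwle := card_palFactors_le w
    constructor
    · rw [Rich]; omega
    · intro hbad
      have hmem : lps (w ++ [a]) ∈ palFactors w := mem_palFactors.mpr ⟨hbad, lps_pal _⟩
      rw [Finset.insert_eq_self.mpr hmem] at hsub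
      omega
  · rintro ⟨hrich, hnot⟩
    have hmem : lps (w ++ [a]) ∈ palFactors (w ++ [a]) :=
      mem_palFactors.mpr ⟨(lps_suffix _).isInfix, lps_pal _⟩
    have hnm : lps (w ++ [a]) ∉ palFactors w := by
      intro h
      exact hnot (mem_palFactors.mp h).1
    have hsub : insert (lps (w ++ [a])) (palFactors w) ⊆ palFactors (w ++ [a]) :=
      Finset.insert_subset hmem (palFactors_mono ⟨[], [a], by simp⟩)
    have h1 : (palFactors w).card + 1 ≤ (palFactors (w ++ [a])).card := by
      have := Finset.card_le_card hsub
      rwa [Finset.card_insert_of_notMem hnm] at this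
    have h2 := card_palFactors_le (w ++ [a])
    rw [Rich] at hrich ⊢
    omega

theorem rich_prefix {w p : List A} (h : Rich w) (hp : p <+: w) : Rich p := by
  induction w using List.reverseRecOn with
  | nil => rw [List.prefix_nil.mp hp]; exact h
  | append_singleton u a ih =>
    rcases le_or_gt p.length u.length with hl | hl
    · exact ih (rich_concat_iff.mp h).1
        (List.prefix_of_prefix_length_le hp (u.prefix_append [a]) hl)
    · have hlen : p.length = (u ++ [a]).length := by
        have := hp.length_le
        simp only [List.length_append, List.length_singleton] at this ⊢
        omega
      rw [hp.eq_of_length hlen]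
      exact h

theorem lps_not_infix_dropLast {u : List A} (h : Rich u) (hu : u ≠ []) :
    ¬ lps u <:+: u.dropLast := by
  rcases List.eq_nil_or_concat u with rfl | ⟨u', b, rfl⟩
  · exact absurd rfl hu
  · rw [List.concat_eq_append] at h ⊢
    rw [List.dropLast_concat]
    exact (rich_concat_iff.mp h).2

theorem key_forward {w : List A} (hw : Rich w) :
    ∀ n, ∀ v z : List A, v ≠ [] → v <+: z → v.reverse <:+ z →
      (∀ s t, z = s ++ v ++ t → s = [] ∨ (t = [] ∧ v.reverse = v)) →
      (∀ s t, z = s ++ v.reverse ++ t → t = [] ∨ (s = [] ∧ v.reverse = v)) →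
      z <:+ w.take n → z.reverse = z := by
  intro n
  induction n using Nat.strong_induction_on with
  | _ n IH =>
  intro v z hvne hvz hrvz H1 H2 hzn
  by_cases hlen : z.length = v.length
  · have hzv : v = z := hvz.eq_of_length hlen.symm
    have hrv : v.reverse = z := hrvz.eq_of_length (by simp [hlen.symm])
    have : v.reverse = v := hrv.trans hzv.symm
    rw [← hzv]
    exact this
  have hvzlt : v.length < z.length := lt_of_le_of_ne hvz.length_le (fun h => hlen h.symm)
  set u := w.take n with hu
  have hzu : z <:+ u := hzn
  have hzne : z ≠ [] := by
    intro h; subst h; exact hvne (List.prefix_nil.mp hvz)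
  have hune : u ≠ [] := by
    intro h; rw [h] at hzu; exact hzne (List.suffix_nil.mp hzu)
  have hRu : Rich u := rich_prefix hw (List.take_prefix n w)
  have hp_pal := lps_pal u
  have hp_suf := lps_suffix u
  have hp_uni := lps_not_infix_dropLast hRu hune
  rcases lt_trichotomy (lps u).length z.length with hplt | hpeq | hpgt
  · -- longest palindromic suffix shorter than z : contradiction
    exfalso
    obtain ⟨u₁, hu₁⟩ := id hzu
    obtain ⟨t₂, ht₂⟩ := hvz
    have ht₂ne : t₂ ≠ [] := by
      intro h; subst h
      rw [List.append_nil] at ht₂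
      rw [ht₂] at hvzlt
      omega
    rcases le_or_gt v.reverse.length (lps u).length with hc | hc
    · have hrvp : v.reverse <:+ lps u :=
        suffix_of_suffix_length_le (hrvz.trans hzu) hp_suf hc
      have hvp : v <+: lps u := by
        have := List.reverse_prefix.mpr hrvp
        rwa [List.reverse_reverse, hp_pal] at this
      obtain ⟨r, hr⟩ := hvp
      have hpz : lps u <:+ z := suffix_of_suffix_length_le hp_suf hzu (le_of_lt hplt)
      obtain ⟨s, hs⟩ := hpz
      have hsne : s ≠ [] := by
        intro h; subst h
        rw [List.nil_append] at hs
        rw [hs] at hplt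
        omega
      have hzdec : z = s ++ v ++ r := by rw [List.append_assoc, hr, hs]
      rcases H1 s r hzdec with h | ⟨rfl, hpal⟩
      · exact hsne h
      · rw [List.append_nil] at hr
        have heq : u₁ ++ lps u ++ t₂ = u := by
          rw [← hr, List.append_assoc, ht₂, hu₁]
        exact hp_uni (infix_dropLast_of_eq heq ht₂ne)
    · have hpv' : lps u <:+ v.reverse :=
        suffix_of_suffix_length_le hp_suf (hrvz.trans hzu) (le_of_lt hc)
      have hpv : lps u <+: v := by
        have := List.reverse_prefix.mpr hpv'
        rwa [hp_pal, List.reverse_reverse] at this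
      obtain ⟨r₂, hr₂⟩ := hpv
      have heq : u₁ ++ lps u ++ (r₂ ++ t₂) = u := by
        have h1 : lps u ++ (r₂ ++ t₂) = z := by rw [← List.append_assoc, hr₂, ht₂]
        rw [List.append_assoc, h1, hu₁]
      have htne : r₂ ++ t₂ ≠ [] := by simp [ht₂ne]
      exact hp_uni (infix_dropLast_of_eq heq htne)
  · -- equal length : z is the longest palindromic suffix
    have hz : z = lps u :=
      (suffix_of_suffix_length_le hzu hp_suf (le_of_eq hpeq.symm)).eq_of_length hpeq.symm
    rw [hz]; exact hp_pal
  · -- longest palindromic suffix longer than z : use induction on z.reverse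
    have hzp : z <:+ lps u := suffix_of_suffix_length_le hzu hp_suf (le_of_lt hpgt)
    have hzrp : z.reverse <+: lps u := by
      have := List.reverse_prefix.mpr hzp
      rwa [hp_pal] at this
    obtain ⟨r₃, hr₃⟩ := hzrp
    obtain ⟨u₂, hu₂⟩ := id hp_suf
    set n' := u₂.length + z.length with hn'
    have hulen : u.length ≤ n := by
      rw [hu]; simp [List.length_take]
    have hn'lt : n' < n := by
      have h1 := congrArg List.length hu₂
      simp only [List.length_append] at h1
      omega
    have htake : u.take n' = u₂ ++ z.reverse := by
      have h2 : (u₂ ++ z.reverse) ++ r₃ = u := by rw [List.append_assoc, hr₃, hu₂]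
      have hlen2 : n' = (u₂ ++ z.reverse).length := by simp [hn']
      rw [← h2, hlen2, List.take_left]
    have hsub : z.reverse <:+ w.take n' := by
      have h3 : w.take n' = u.take n' := by
        rw [hu, List.take_take, min_eq_left (le_of_lt hn'lt)]
      rw [h3, htake]
      exact ⟨u₂, rfl⟩
    have H1' : ∀ s t, z.reverse = s ++ v ++ t → s = [] ∨ (t = [] ∧ v.reverse = v) := by
      intro s t h
      have hz2 : z = t.reverse ++ v.reverse ++ s.reverse := by
        rw [← List.reverse_reverse z, h]
        simp [List.reverse_append, List.append_assoc]
      rcases H2 t.reverse s.reverse hz2 with h' | ⟨h', hpal⟩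
      · left; simpa using h'
      · right; exact ⟨by simpa using h', hpal⟩
    have H2' : ∀ s t, z.reverse = s ++ v.reverse ++ t → t = [] ∨ (s = [] ∧ v.reverse = v) := by
      intro s t h
      have hz2 : z = t.reverse ++ v ++ s.reverse := by
        rw [← List.reverse_reverse z, h]
        simp [List.reverse_append, List.append_assoc]
      rcases H1 t.reverse s.reverse hz2 with h' | ⟨h', hpal⟩
      · left; simpa using h'
      · right; exact ⟨by simpa using h', hpal⟩
    have hvz' : v <+: z.reverse := by
      have := List.reverse_prefix.mpr hrvz
      rwa [List.reverse_reverse] at this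
    have hrvz' : v.reverse <:+ z.reverse := List.reverse_suffix.mpr hvz
    have hres := IH n' hn'lt v z.reverse hvne hvz' hrvz' H1' H2' hsub
    rw [List.reverse_reverse] at hres
    exact hres.symm

theorem key_backward (w : List A)
    (H : ∀ v : List A, v <:+: w → v ≠ [] →
      ∀ z : List A, z <:+: w → v <+: z → v.reverse <:+ z →
        (∀ s t : List A, z = s ++ v ++ t → s = [] ∨ (t = [] ∧ v.reverse = v)) →
        (∀ s t : List A, z = s ++ v.reverse ++ t → t = [] ∨ (s = [] ∧ v.reverse = v)) →
        z.reverse = z) : Rich w := by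
  induction w using List.reverseRecOn with
  | nil => rw [Rich, palFactors_nil]; simp
  | append_singleton u a ih =>
    have hinf : u <:+: u ++ [a] := (List.prefix_append u [a]).isInfix
    have hRu : Rich u := ih (fun v hv hvne z hz =>
      H v (hv.trans hinf) hvne z (hz.trans hinf))
    rw [rich_concat_iff]
    refine ⟨hRu, ?_⟩
    intro hbad
    classical
    set w' := u ++ [a] with hw'
    have hq_pal := lps_pal w'
    have hq_suf := lps_suffix w'
    have hqne : lps w' ≠ [] := by
      have h1 : ([a] : List A).length ≤ (lps w').length :=
        length_le_lps (⟨u, rfl⟩ : [a] <:+ w') (by simp)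
      intro h
      rw [h] at h1
      simp at h1
    set q := lps w' with hqd
    set P : ℕ → Prop := fun e => ∃ s t, s ++ q ++ t = w' ∧ s.length + q.length = e ∧ t ≠ []
      with hP
    obtain ⟨s₀, t₀, hst₀⟩ := hbad
    have hP0 : P (s₀.length + q.length) :=
      ⟨s₀, t₀ ++ [a], by rw [hw', ← hst₀]; simp [List.append_assoc], rfl, by simp⟩
    have hb0 : s₀.length + q.length ≤ w'.length := by
      have h2 := congrArg List.length hst₀
      simp only [List.length_append] at h2
      simp only [hw', List.length_append, List.length_singleton]
      omega
    set e := Nat.findGreatest P w'.length with he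
    have hPe : P e := Nat.findGreatest_spec hb0 hP0
    obtain ⟨s, t, hst, hlen, htne⟩ := hPe
    set z := q ++ t with hz
    have hw'' : s ++ z = w' := by
      rw [hz, ← List.append_assoc, hst]
    have hz_suf : z <:+ w' := ⟨s, hw''⟩
    have key : ∀ s' t', z = s' ++ q ++ t' → s' = [] ∨ t' = [] := by
      intro s' t' h
      by_cases ht' : t' = []
      · right; exact ht'
      left
      by_contra hs'
      have hocc : (s ++ s') ++ q ++ t' = w' := by
        rw [← hw'', h]
        simp [List.append_assoc]
      have hPe' : P ((s ++ s').length + q.length) := ⟨s ++ s', t', hocc, rfl, ht'⟩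
      have hb' : (s ++ s').length + q.length ≤ w'.length := by
        have h2 := congrArg List.length hocc
        simp only [List.length_append] at h2 ⊢
        omega
      have hlt : e < (s ++ s').length + q.length := by
        have h3 : 0 < s'.length := List.length_pos_iff.mpr hs'
        have h4 : (s ++ s').length = s.length + s'.length := List.length_append
        omega
      exact Nat.findGreatest_is_greatest hlt hb' hPe'
    have hzpal : z.reverse = z := by
      refine H q hq_suf.isInfix hqne z hz_suf.isInfix ⟨t, rfl⟩ ?_ ?_ ?_
      · rw [hq_pal]
        exact suffix_of_suffix_length_le hq_suf hz_suf (by simp [hz])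
      · intro s' t' h
        rcases key s' t' h with h' | h'
        · exact Or.inl h'
        · exact Or.inr ⟨h', hq_pal⟩
      · intro s' t' h
        rw [hq_pal] at h
        rcases key s' t' h with h' | h'
        · exact Or.inr ⟨h', hq_pal⟩
        · exact Or.inl h'
    have hle : z.length ≤ q.length := length_le_lps hz_suf hzpal
    have htpos : 0 < t.length := List.length_pos_iff.mpr htne
    rw [hz, List.length_append] at hle
    omega

end RichAux

/-- A finite word `w` is rich if and only if, for each non-empty factor `v` of `w`,
every factor `z` of `w` that begins with `v`, ends with the reversal of `v`, and
contains no occurrence of `v` or of the reversal of `v` other than these two,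
is a palindrome.  (An occurrence of `v` at the end of `z`, or of `v.reverse` at the
beginning of `z`, is "one of these two" only when `v` is itself a palindrome, so that
it coincides with the prescribed suffix occurrence of `v.reverse`, resp. the
prescribed prefix occurrence of `v`.) -/
theorem rich_iff_factors_from_v_to_reverse_palindromic {A : Type*} [DecidableEq A]
    (w : List A) :
    Rich w ↔ ∀ v : List A, v <:+: w → v ≠ [] →
      ∀ z : List A, z <:+: w → v <+: z → v.reverse <:+ z →
        (∀ s t : List A, z = s ++ v ++ t → s = [] ∨ (t = [] ∧ v.reverse = v)) →
        (∀ s t : List A, z = s ++ v.reverse ++ t → t = [] ∨ (s = [] ∧ v.reverse = v)) →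
        z.reverse = z := by
  constructor
  · intro hw v hvw hvne z hzw hvz hrvz H1 H2
    obtain ⟨s, t, hst⟩ := hzw
    have htake : w.take (s.length + z.length) = s ++ z := by
      rw [← hst]
      have h1 : s.length + z.length = (s ++ z).length := by simp
      rw [h1, List.take_left]
    exact key_forward hw (s.length + z.length) v z hvne hvz hrvz H1 H2
      (by rw [htake]; exact ⟨s, rfl⟩)
  · intro H
    exact key_backward w H
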